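/- Let f : {-1,1}^n → ℝ be a nonzero function of degree at most k. Then E_x[|f(x)|] ≥ (1/4) e^{-4k} · ||f||_2, where ||f||_2 = (E_x[f(x)^2])^{1/2} and x is uniform on {-1,1}^n. -/

import Mathlib

/-- The sign of a Boolean, as a real number in `{-1,1}`. -/
def sgn (b : Bool) : ℝ := if b then 1 else -1

/-- Fourier coefficient of a function on the Boolean cube `{-1,1}^n`. -/
noncomputable def cubeCoeff {n : ℕ} (f : (Fin n → Bool) → ℝ) (K : Finset (Fin n)) : ℝ :=
  (2 : ℝ) ^ (-(n : ℤ)) * ∑ x : Fin n → Bool, f x * ∏ i ∈ K, sgn (x i)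

/-- Expectation over a uniformly random point of the Boolean cube. -/
noncomputable def cubeMean {n : ℕ} (f : (Fin n → Bool) → ℝ) : ℝ :=
  (2 : ℝ) ^ (-(n : ℤ)) * ∑ x : Fin n → Bool, f x

lemma sgn_mul_self (b : Bool) : sgn b * sgn b = 1 := by cases b <;> simp [sgn]

lemma sum_chi_mul (n : ℕ) (x y : Fin n → Bool) :
    ∑ K : Finset (Fin n), (∏ i ∈ K, sgn (x i)) * ∏ i ∈ K, sgn (y i)
      = if x = y then (2 : ℝ) ^ n else 0 := by
  have h1 : ∀ K : Finset (Fin n),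
      (∏ i ∈ K, sgn (x i)) * ∏ i ∈ K, sgn (y i)
        = ∏ i ∈ K, (sgn (x i) * sgn (y i)) := fun K => (Finset.prod_mul_distrib).symm
  simp only [h1]
  have h2 : ∑ K : Finset (Fin n), ∏ i ∈ K, (sgn (x i) * sgn (y i))
      = ∏ i : Fin n, (sgn (x i) * sgn (y i) + 1) := by
    rw [Finset.prod_add]
    simp [Finset.powerset_univ]
  rw [h2]
  by_cases hxy : x = y
  · subst hxy
    simp only [sgn_mul_self, if_true]
    norm_num
  · rw [if_neg hxy]
    obtain ⟨i, hi⟩ : ∃ i, x i ≠ y i := by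
      by_contra h
      push_neg at h
      exact hxy (funext h)
    apply Finset.prod_eq_zero (Finset.mem_univ i)
    cases hx : x i <;> cases hy : y i <;> simp_all [sgn]

lemma fourier_inversion {n : ℕ} (f : (Fin n → Bool) → ℝ) (x : Fin n → Bool) :
    f x = ∑ K : Finset (Fin n), cubeCoeff f K * ∏ i ∈ K, sgn (x i) := by
  unfold cubeCoeff
  have step1 : ∑ K : Finset (Fin n), ((2 : ℝ) ^ (-(n : ℤ)) * ∑ y : Fin n → Bool,
        f y * ∏ i ∈ K, sgn (y i)) * ∏ i ∈ K, sgn (x i)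
      = (2 : ℝ) ^ (-(n : ℤ)) * ∑ K : Finset (Fin n), ∑ y : Fin n → Bool,
          f y * ((∏ i ∈ K, sgn (y i)) * ∏ i ∈ K, sgn (x i)) := by
    rw [Finset.mul_sum]
    refine Finset.sum_congr rfl fun K _ => ?_
    have h : (∑ y : Fin n → Bool, f y * ∏ i ∈ K, sgn (y i)) * ∏ i ∈ K, sgn (x i)
        = ∑ y : Fin n → Bool, f y * ((∏ i ∈ K, sgn (y i)) * ∏ i ∈ K, sgn (x i)) := by
      rw [Finset.sum_mul]
      exact Finset.sum_congr rfl fun y _ => by ring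
    rw [mul_assoc, h]
  rw [step1, Finset.sum_comm]
  have step2 : ∀ y : Fin n → Bool, ∑ K : Finset (Fin n),
      f y * ((∏ i ∈ K, sgn (y i)) * ∏ i ∈ K, sgn (x i))
        = f y * (if y = x then (2 : ℝ) ^ n else 0) := by
    intro y
    rw [← Finset.mul_sum, sum_chi_mul]
  simp only [step2]
  simp only [mul_ite, mul_zero, Finset.sum_ite_eq', Finset.mem_univ, if_true]
  have : (2 : ℝ) ^ (-(n : ℤ)) * (2 : ℝ) ^ n = 1 := by
    rw [← zpow_natCast (2:ℝ) n, ← zpow_add₀ (by norm_num : (2:ℝ) ≠ 0)]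
    simp
  rw [mul_comm (f x), ← mul_assoc, this, one_mul]

lemma zero_not_mem_map (n : ℕ) (K : Finset (Fin n)) :
    (0 : Fin (n+1)) ∉ K.map (Fin.succEmb n) := by
  simp only [Finset.mem_map, not_exists]
  rintro j ⟨-, h⟩
  exact (Fin.succ_ne_zero j) h

lemma finset_split_sum (n : ℕ) (F : Finset (Fin (n+1)) → ℝ) :
    ∑ L : Finset (Fin (n+1)), F L
      = (∑ K : Finset (Fin n), F (K.map (Fin.succEmb n)))
        + ∑ K : Finset (Fin n), F (insert 0 (K.map (Fin.succEmb n))) := by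
  set e : Bool × Finset (Fin n) → Finset (Fin (n+1)) :=
    fun p => if p.1 then insert 0 (p.2.map (Fin.succEmb n)) else p.2.map (Fin.succEmb n) with he
  have hinj : Function.Injective e := by
    rintro ⟨b, K⟩ ⟨b', K'⟩ h
    simp only [he] at h
    have hmem : ∀ (b : Bool) (K : Finset (Fin n)), (0 : Fin (n+1)) ∈
        (if b then insert 0 (K.map (Fin.succEmb n)) else K.map (Fin.succEmb n)) ↔ b = true := by
      intro b K
      cases b <;> simp [zero_not_mem_map n K]
    have hb : b = b' := by
      have := (hmem b K).symm.trans (h ▸ hmem b' K')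
      cases b <;> cases b' <;> simp_all
    subst hb
    have hK : K.map (Fin.succEmb n) = K'.map (Fin.succEmb n) := by
      cases b with
      | false => simpa using h
      | true =>
        simp only [if_true] at h
        have := congrArg (fun s => Finset.erase s 0) h
        simpa [Finset.erase_insert (zero_not_mem_map n K),
          Finset.erase_insert (zero_not_mem_map n K')] using this
    have : K = K' := Finset.map_injective _ hK
    simp [this]
  have hbij : Function.Bijective e := by
    rw [Fintype.bijective_iff_injective_and_card]
    refine ⟨hinj, ?_⟩
    simp [Fintype.card_finset, Fintype.card_prod, Fintype.card_fin]
    ring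
  rw [← Fintype.sum_bijective e hbij (fun p => F (e p)) F (fun p => rfl)]
  rw [Fintype.sum_prod_type]
  rw [Fintype.sum_bool]
  simp only [he]
  simp only [if_true, Bool.false_eq_true, if_false]
  ring

/-- `f` is in the span of characters of size at most `k`. -/
def HasDeg {n : ℕ} (k : ℕ) (f : (Fin n → Bool) → ℝ) : Prop :=
  ∃ c : Finset (Fin n) → ℝ, (∀ K, k < K.card → c K = 0) ∧
    ∀ x, f x = ∑ K : Finset (Fin n), c K * ∏ i ∈ K, sgn (x i)

lemma decompose {n k : ℕ} {f : (Fin (n+1) → Bool) → ℝ} (hf : HasDeg k f) :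
    ∃ g h : (Fin n → Bool) → ℝ, HasDeg k g ∧
      (if k = 0 then ∀ y, h y = 0 else HasDeg (k-1) h) ∧
      ∀ b y, f (Fin.cons b y : Fin (n+1) → Bool) = g y + sgn b * h y := by
  obtain ⟨c, hc, hrep⟩ := hf
  refine ⟨fun y => ∑ K : Finset (Fin n), c (K.map (Fin.succEmb n)) * ∏ i ∈ K, sgn (y i),
    fun y => ∑ K : Finset (Fin n), c (insert 0 (K.map (Fin.succEmb n))) * ∏ i ∈ K, sgn (y i),
    ?_, ?_, ?_⟩
  · exact ⟨_, fun K hK => hc _ (by rwa [Finset.card_map]), fun y => rfl⟩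
  · have hcard : ∀ K : Finset (Fin n),
        (insert (0 : Fin (n+1)) (K.map (Fin.succEmb n))).card = K.card + 1 := by
      intro K
      rw [Finset.card_insert_of_notMem (zero_not_mem_map n K), Finset.card_map]
    by_cases hk : k = 0
    · subst hk
      rw [if_pos rfl]
      intro y
      have : ∀ K : Finset (Fin n), c (insert 0 (K.map (Fin.succEmb n))) = 0 := by
        intro K
        exact hc _ (by rw [hcard]; omega)
      simp [this]
    · rw [if_neg hk]
      refine ⟨_, fun K hK => hc _ ?_, fun y => rfl⟩
      rw [hcard]
      omega
  · intro b y
    rw [hrep (Fin.cons b y), finset_split_sum n]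
    have h1 : ∀ K : Finset (Fin n),
        (∏ i ∈ K.map (Fin.succEmb n), sgn ((Fin.cons b y : Fin (n+1) → Bool) i)) = ∏ i ∈ K, sgn (y i) := by
      intro K
      rw [Finset.prod_map]
      exact Finset.prod_congr rfl fun i _ => by simp [Fin.cons_succ]
    have h2 : ∀ K : Finset (Fin n),
        (∏ i ∈ insert (0 : Fin (n+1)) (K.map (Fin.succEmb n)), sgn ((Fin.cons b y : Fin (n+1) → Bool) i))
          = sgn b * ∏ i ∈ K, sgn (y i) := by
      intro K
      rw [Finset.prod_insert (zero_not_mem_map n K), h1]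
      simp [Fin.cons_zero]
    simp only [h1, h2]
    rw [Finset.mul_sum]
    congr 1
    exact Finset.sum_congr rfl fun K _ => by ring

lemma cube_sum_split (n : ℕ) (F : (Fin (n+1) → Bool) → ℝ) :
    ∑ x : Fin (n+1) → Bool, F x
      = ∑ y : Fin n → Bool, (F (Fin.cons true y) + F (Fin.cons false y)) := by
  rw [← Equiv.sum_comp (Fin.consEquiv (fun _ => Bool)) F, Fintype.sum_prod_type,
    Fintype.sum_bool]
  rw [Finset.sum_add_distrib]
  rfl

set_option maxHeartbeats 1000000 in
lemma bonami : ∀ (n k : ℕ) (f : (Fin n → Bool) → ℝ), HasDeg k f →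
    (2:ℝ)^n * ∑ x : Fin n → Bool, f x ^ 4 ≤ 9^k * (∑ x : Fin n → Bool, f x ^ 2)^2 := by
  intro n
  induction n with
  | zero =>
    intro k f _
    rw [Fintype.sum_unique, Fintype.sum_unique]
    have h9 : (1:ℝ) ≤ 9^k := one_le_pow₀ (by norm_num)
    nlinarith [sq_nonneg (f default ^ 2), sq_nonneg (f default)]
  | succ n ih =>
    intro k f hf
    obtain ⟨g, h, hg, hh, hgh⟩ := decompose hf
    have hsum4 : ∑ x : Fin (n+1) → Bool, f x ^ 4
        = 2*(∑ y, g y^4) + 12*(∑ y, g y^2 * h y^2) + 2*(∑ y, h y^4) := by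
      rw [cube_sum_split]
      have key : ∀ y : Fin n → Bool, f (Fin.cons true y) ^ 4 + f (Fin.cons false y) ^ 4
          = 2*g y^4 + 12*(g y^2 * h y^2) + 2*h y^4 := by
        intro y
        rw [hgh true y, hgh false y]
        simp only [sgn, if_true, Bool.false_eq_true, if_false]
        ring
      rw [Finset.sum_congr rfl (fun y _ => key y)]
      rw [Finset.sum_add_distrib, Finset.sum_add_distrib,
        ← Finset.mul_sum, ← Finset.mul_sum, ← Finset.mul_sum]
    have hsum2 : ∑ x : Fin (n+1) → Bool, f x ^ 2
        = 2*(∑ y, g y^2) + 2*(∑ y, h y^2) := by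
      rw [cube_sum_split]
      have key : ∀ y : Fin n → Bool, f (Fin.cons true y) ^ 2 + f (Fin.cons false y) ^ 2
          = 2*g y^2 + 2*h y^2 := by
        intro y
        rw [hgh true y, hgh false y]
        simp only [sgn, if_true, Bool.false_eq_true, if_false]
        ring
      rw [Finset.sum_congr rfl (fun y _ => key y)]
      rw [Finset.sum_add_distrib, ← Finset.mul_sum, ← Finset.mul_sum]
    rw [hsum4, hsum2]
    set a := ∑ y, g y^2 with ha
    set b := ∑ y, h y^2 with hb
    set A := ∑ y, g y^4 with hA
    set B := ∑ y, h y^4 with hB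
    set C := ∑ y, g y^2 * h y^2 with hC
    have hG : (2:ℝ)^n * A ≤ 9^k * a^2 := ih k g hg
    have ha0 : 0 ≤ a := Finset.sum_nonneg fun y _ => by positivity
    have hb0 : 0 ≤ b := Finset.sum_nonneg fun y _ => by positivity
    have hA0 : 0 ≤ A := Finset.sum_nonneg fun y _ => by positivity
    have hB0 : 0 ≤ B := Finset.sum_nonneg fun y _ => by positivity
    have hC0 : 0 ≤ C := Finset.sum_nonneg fun y _ => by positivity
    have hCS : C^2 ≤ A * B := by
      have := Finset.sum_mul_sq_le_sq_mul_sq Finset.univ (fun y => g y^2) (fun y => h y^2)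
      calc C^2 = (∑ y, (g y^2) * (h y^2))^2 := rfl
        _ ≤ (∑ y, (g y^2)^2) * (∑ y, (h y^2)^2) := this
        _ = A * B := by
            rw [hA, hB]
            congr 1 <;> exact Finset.sum_congr rfl fun y _ => by ring
    have hP0 : (0:ℝ) < 2^n := by positivity
    rcases Nat.eq_zero_or_pos k with hk | hk
    · subst hk
      rw [if_pos rfl] at hh
      have hb' : b = 0 := by rw [hb]; exact Finset.sum_eq_zero fun y _ => by rw [hh y]; ring
      have hB' : B = 0 := by rw [hB]; exact Finset.sum_eq_zero fun y _ => by rw [hh y]; ring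
      have hC' : C = 0 := by rw [hC]; exact Finset.sum_eq_zero fun y _ => by rw [hh y]; ring
      rw [hb', hB', hC'] at *
      simp only [pow_zero, one_mul] at hG ⊢
      rw [pow_succ]
      nlinarith
    · obtain ⟨k', rfl⟩ : ∃ k', k = k' + 1 := ⟨k - 1, by omega⟩
      rw [if_neg (by omega)] at hh
      have hH : (2:ℝ)^n * B ≤ 9^k' * b^2 := by
        have : k' + 1 - 1 = k' := rfl
        exact ih k' h (this ▸ hh)
      have h1 : ((2:ℝ)^n * C)^2 ≤ ((2:ℝ)^n * A) * ((2:ℝ)^n * B) := by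
        calc ((2:ℝ)^n * C)^2 = ((2:ℝ)^n)^2 * C^2 := by ring
          _ ≤ ((2:ℝ)^n)^2 * (A*B) := by
              exact mul_le_mul_of_nonneg_left hCS (by positivity)
          _ = ((2:ℝ)^n * A) * ((2:ℝ)^n * B) := by ring
      have h2 : ((2:ℝ)^n * A) * ((2:ℝ)^n * B) ≤ (9^(k'+1) * a^2) * (9^k' * b^2) := by
        apply mul_le_mul hG hH (by positivity) (by positivity)
      have h3 : ((9:ℝ)^(k'+1) * a^2) * (9^k' * b^2) = (3 * 9^k' * (a*b))^2 := by
        rw [pow_succ]; ring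
      have h4 : (2:ℝ)^n * C ≤ 3 * 9^k' * (a*b) := by
        have hx : ((2:ℝ)^n * C)^2 ≤ (3 * 9^k' * (a*b))^2 := by
          calc ((2:ℝ)^n * C)^2 ≤ ((2:ℝ)^n * A) * ((2:ℝ)^n * B) := h1
            _ ≤ (9^(k'+1) * a^2) * (9^k' * b^2) := h2
            _ = (3 * 9^k' * (a*b))^2 := h3
        have hy : (0:ℝ) ≤ 3 * 9^k' * (a*b) := by positivity
        have hz : (0:ℝ) ≤ (2:ℝ)^n * C := by positivity
        have := Real.sqrt_le_sqrt hx
        rwa [Real.sqrt_sq hz, Real.sqrt_sq hy] at this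
      have hG' : (2:ℝ)^n * A ≤ 9 * 9^k' * a^2 := by rw [pow_succ] at hG; linarith
      rw [pow_succ (2:ℝ) n, pow_succ (9:ℝ) k']
      nlinarith [hG', hH, h4, mul_nonneg (mul_nonneg (pow_nonneg (by norm_num : (0:ℝ) ≤ 9) k') hb0) hb0]

/-- If `f : {-1,1}^n → ℝ` is nonzero of degree at most `k`, then
`E_x[|f|] ≥ (1/4) e^{-4k} ‖f‖₂` where `‖f‖₂ = (E_x[f²])^{1/2}`. -/
theorem mean_abs_ge (n k : ℕ) (f : (Fin n → Bool) → ℝ)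
    (hdeg : ∀ K : Finset (Fin n), k < K.card → cubeCoeff f K = 0)
    (hnz : ∃ x, f x ≠ 0) :
    cubeMean (fun x => |f x|)
      ≥ (1 / 4 : ℝ) * Real.exp (-4 * k) * Real.sqrt (cubeMean (fun x => f x ^ 2)) := by
  have hZ : (2:ℝ) ^ (-(n : ℤ)) = ((2:ℝ)^n)⁻¹ := by
    rw [zpow_neg, zpow_natCast]
  set N := (2:ℝ)^n with hNdef
  have hNpos : (0:ℝ) < N := by positivity
  set S1 := ∑ x : Fin n → Bool, |f x| with hS1def
  set S2 := ∑ x : Fin n → Bool, f x ^ 2 with hS2def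
  set S3 := ∑ x : Fin n → Bool, |f x| ^ 3 with hS3def
  set S4 := ∑ x : Fin n → Bool, f x ^ 4 with hS4def
  have hS10 : 0 ≤ S1 := Finset.sum_nonneg fun x _ => abs_nonneg _
  have hS30 : 0 ≤ S3 := Finset.sum_nonneg fun x _ => by positivity
  have hS40 : 0 ≤ S4 := Finset.sum_nonneg fun x _ => by positivity
  have hS2pos : 0 < S2 := by
    obtain ⟨x0, hx0⟩ := hnz
    refine Finset.sum_pos' (fun x _ => by positivity) ⟨x0, Finset.mem_univ x0, ?_⟩
    exact pow_two_pos_of_ne_zero hx0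
  -- Bonami
  have hB : N * S4 ≤ 9^k * S2^2 :=
    bonami n k f ⟨cubeCoeff f, hdeg, fourier_inversion f⟩
  -- Cauchy–Schwarz I : S2^2 ≤ S1 * S3
  have hCSa : S2^2 ≤ S1 * S3 := by
    set u : (Fin n → Bool) → ℝ := fun x => Real.sqrt |f x| with hu
    have key := Finset.sum_mul_sq_le_sq_mul_sq Finset.univ u (fun x => |f x| * u x)
    have e1 : ∀ x : Fin n → Bool, u x * (|f x| * u x) = f x ^ 2 := by
      intro x
      rw [show u x * (|f x| * u x) = |f x| * u x ^ 2 from by ring, hu]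
      simp only
      rw [Real.sq_sqrt (abs_nonneg _), abs_mul_abs_self]
      ring
    have e2 : ∀ x : Fin n → Bool, u x ^ 2 = |f x| := fun x =>
      Real.sq_sqrt (abs_nonneg _)
    have e3 : ∀ x : Fin n → Bool, (|f x| * u x) ^ 2 = |f x| ^ 3 := by
      intro x
      rw [mul_pow, e2]
      ring
    calc S2^2 = (∑ x : Fin n → Bool, u x * (|f x| * u x))^2 := by
          rw [hS2def]; congr 1; exact Finset.sum_congr rfl fun x _ => (e1 x).symm
      _ ≤ (∑ x : Fin n → Bool, u x ^ 2) * ∑ x : Fin n → Bool, (|f x| * u x)^2 := key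
      _ = S1 * S3 := by
          rw [hS1def, hS3def]
          congr 1
          · exact Finset.sum_congr rfl fun x _ => e2 x
          · exact Finset.sum_congr rfl fun x _ => e3 x
  -- Cauchy–Schwarz II : S3^2 ≤ S2 * S4
  have hCSb : S3^2 ≤ S2 * S4 := by
    have key := Finset.sum_mul_sq_le_sq_mul_sq Finset.univ (fun x => |f x|)
      (fun x => f x ^ 2)
    have e1 : ∀ x : Fin n → Bool, |f x| * f x ^ 2 = |f x| ^ 3 := by
      intro x
      rw [← sq_abs]
      ring
    calc S3^2 = (∑ x : Fin n → Bool, |f x| * f x ^ 2)^2 := by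
          rw [hS3def]; congr 1; exact Finset.sum_congr rfl fun x _ => (e1 x).symm
      _ ≤ (∑ x : Fin n → Bool, |f x| ^ 2) * ∑ x : Fin n → Bool, (f x ^ 2)^2 := key
      _ = S2 * S4 := by
          rw [hS2def, hS4def]
          congr 1
          · exact Finset.sum_congr rfl fun x _ => sq_abs _
          · exact Finset.sum_congr rfl fun x _ => by ring
  -- main inequality : N * S2 ≤ 9^k * S1^2
  have h5 : S2^4 ≤ S1^2 * (S2 * S4) := by
    calc S2^4 = (S2^2)^2 := by ring
      _ ≤ (S1 * S3)^2 := by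
          apply pow_le_pow_left₀ (by positivity) hCSa
      _ = S1^2 * S3^2 := by ring
      _ ≤ S1^2 * (S2 * S4) := mul_le_mul_of_nonneg_left hCSb (by positivity)
  have h6 : S2^3 ≤ S1^2 * S4 := by
    have := h5
    have h7 : S2^3 * S2 ≤ (S1^2 * S4) * S2 := by nlinarith
    exact le_of_mul_le_mul_right h7 hS2pos
  have hmain : N * S2 ≤ 9^k * S1^2 := by
    have h8 : (N * S2) * S2^2 ≤ (9^k * S1^2) * S2^2 := by
      calc (N * S2) * S2^2 = N * S2^3 := by ring
        _ ≤ N * (S1^2 * S4) := mul_le_mul_of_nonneg_left h6 (le_of_lt hNpos)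
        _ = S1^2 * (N * S4) := by ring
        _ ≤ S1^2 * (9^k * S2^2) := mul_le_mul_of_nonneg_left hB (by positivity)
        _ = (9^k * S1^2) * S2^2 := by ring
    exact le_of_mul_le_mul_right h8 (by positivity)
  -- conclude
  have hgoal1 : cubeMean (fun x => |f x|) = N⁻¹ * S1 := by
    rw [cubeMean, hZ]
  have hgoal2 : cubeMean (fun x => f x ^ 2) = N⁻¹ * S2 := by
    rw [cubeMean, hZ]
  rw [hgoal1, hgoal2]
  set M := N⁻¹ * S2 with hMdef
  have hM0 : 0 ≤ M := by positivity
  have hsqle : M ≤ (3^k * (N⁻¹ * S1))^2 := by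
    have expand : ((3:ℝ)^k * (N⁻¹ * S1))^2 = 9^k * S1^2 * (N⁻¹ * N⁻¹) := by
      rw [show (9:ℝ)^k = 3^k * 3^k from by rw [← mul_pow]; norm_num]
      ring
    have hMeq : M = (N * S2) * (N⁻¹ * N⁻¹) := by
      rw [hMdef]
      field_simp
    rw [expand, hMeq]
    exact mul_le_mul_of_nonneg_right hmain (by positivity)
  have hfin : Real.sqrt M ≤ 3^k * (N⁻¹ * S1) := by
    calc Real.sqrt M ≤ Real.sqrt ((3^k * (N⁻¹ * S1))^2) := Real.sqrt_le_sqrt hsqle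
      _ = 3^k * (N⁻¹ * S1) := Real.sqrt_sq (by positivity)
  have h3k : (1 / 4 : ℝ) * Real.exp (-4 * k) ≤ ((3:ℝ)^k)⁻¹ := by
    have he1 : Real.exp (-4 * (k:ℝ)) = (Real.exp (-4))^k := by
      rw [show (-4:ℝ) * k = (k:ℝ) * (-4) from by ring, Real.exp_nat_mul]
    have he2 : Real.exp (-4:ℝ) ≤ (3:ℝ)⁻¹ := by
      rw [Real.exp_neg]
      have h4 : (3:ℝ) ≤ Real.exp 4 := by
        have := Real.add_one_le_exp (4:ℝ)
        linarith
      exact inv_anti₀ (by norm_num) h4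
    have he3 : (Real.exp (-4))^k ≤ ((3:ℝ)⁻¹)^k :=
      pow_le_pow_left₀ (Real.exp_nonneg _) he2 k
    rw [he1, inv_pow] at *
    have hp : 0 ≤ (Real.exp (-4:ℝ))^k := by positivity
    linarith [he3]
  calc (1 / 4 : ℝ) * Real.exp (-4 * k) * Real.sqrt M
      ≤ ((3:ℝ)^k)⁻¹ * Real.sqrt M :=
        mul_le_mul_of_nonneg_right h3k (Real.sqrt_nonneg _)
    _ ≤ N⁻¹ * S1 := by
        rw [inv_mul_eq_div, div_le_iff₀ (by positivity)]
        calc Real.sqrt M ≤ 3^k * (N⁻¹ * S1) := hfin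
          _ = N⁻¹ * S1 * 3^k := by ring
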